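/- There exists a constant c > 0 such that for infinitely many n there is a totally nonsingular n-by-n real matrix A and a real number b whose multiplicity in A is at least c · n^{3/2}. -/

import Mathlib

set_option maxHeartbeats 1000000

/-- An n-by-n real matrix is totally nonsingular if every minor of it
(of every size) is nonzero. -/
def TotallyNonsingular {n : ℕ} (A : Matrix (Fin n) (Fin n) ℝ) : Prop :=
  ∀ (k : ℕ) (f g : Fin k → Fin n), StrictMono f → StrictMono g →
    (A.submatrix f g).det ≠ 0

/-- Any rectangle-free 1-pattern can be completed to a nonsingular real matrix. -/
lemma rectFree_pattern_completion : ∀ (k : ℕ) (p : Fin k → Fin k → Bool),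
    (∀ i i' j j', p i j → p i j' → p i' j → p i' j' → i = i' ∨ j = j') →
    ∃ B : Matrix (Fin k) (Fin k) ℝ, (∀ i j, p i j → B i j = 1) ∧ B.det ≠ 0 := by
  intro k
  induction k with
  | zero =>
    intro p _
    exact ⟨fun i => i.elim0, fun i => i.elim0, ne_of_eq_of_ne Matrix.det_fin_zero one_ne_zero⟩
  | succ k ih =>
    intro p hrf
    by_cases hall : ∀ i j, p i j = true
    · -- all entries forced to 1; only possible when k = 0
      match k with
      | 0 =>
        refine ⟨fun _ _ => 1, fun _ _ _ => rfl, ?_⟩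
        exact ne_of_eq_of_ne (Matrix.det_fin_one _) (by norm_num)
      | k + 1 =>
        rcases hrf 0 1 0 1 (hall 0 0) (hall 0 1) (hall 1 0) (hall 1 1) with h | h <;>
          exact absurd h (by simp [Fin.ext_iff])
    · push_neg at hall
      obtain ⟨i, j, hij⟩ := hall
      simp only [Bool.not_eq_true] at hij
      set p' : Fin k → Fin k → Bool := fun a b => p (i.succAbove a) (j.succAbove b) with hp'
      have hrf' : ∀ a a' b b', p' a b → p' a b' → p' a' b → p' a' b' → a = a' ∨ b = b' := by
        intro a a' b b' h1 h2 h3 h4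
        rcases hrf _ _ _ _ h1 h2 h3 h4 with h | h
        · exact Or.inl (Fin.succAbove_right_injective h)
        · exact Or.inr (Fin.succAbove_right_injective h)
      obtain ⟨C, hC1, hCdet⟩ := ih p' hrf'
      -- row i (with parameter t at column j), and the other rows
      set row : ℝ → (Fin (k + 1) → ℝ) :=
        fun t => j.insertNth t (fun b' => if p i (j.succAbove b') then (1 : ℝ) else 0) with hrow
      set Q : Fin k → Fin (k + 1) → ℝ :=
        fun a' => j.insertNth (if p (i.succAbove a') j then (1 : ℝ) else 0) (C a') with hQ
      set B : ℝ → Matrix (Fin (k + 1)) (Fin (k + 1)) ℝ := fun t => i.insertNth (row t) Q with hB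
      have hBpat : ∀ t a b, p a b → B t a b = 1 := by
        intro t a b hab
        rcases eq_or_ne a i with rfl | ha
        · rcases eq_or_ne b j with rfl | hb
          · rw [hab] at hij; exact absurd hij (by simp)
          · obtain ⟨b', rfl⟩ := Fin.exists_succAbove_eq hb
            simp only [hB, hrow, Fin.insertNth_apply_same, Fin.insertNth_apply_succAbove]
            simp [hab]
        · obtain ⟨a', rfl⟩ := Fin.exists_succAbove_eq ha
          rcases eq_or_ne b j with rfl | hb
          · simp only [hB, hQ, Fin.insertNth_apply_succAbove, Fin.insertNth_apply_same]
            simp [hab]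
          · obtain ⟨b', rfl⟩ := Fin.exists_succAbove_eq hb
            simp only [hB, hQ, Fin.insertNth_apply_succAbove]
            exact hC1 a' b' hab
      have hsub : ∀ t, (B t).submatrix i.succAbove j.succAbove = C := by
        intro t
        ext a' b'
        change (B t) (i.succAbove a') (j.succAbove b') = C a' b'
        simp [hB, hQ, Matrix.submatrix_apply, Fin.insertNth_apply_succAbove]
      have hrowi : ∀ t b, B t i b = row t b := by
        intro t b; simp [hB, Fin.insertNth_apply_same]
      have hoff : ∀ t a', B t (i.succAbove a') = Q a' := by
        intro t a'; simp [hB, Fin.insertNth_apply_succAbove]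
      have hdiff : (B 1).det - (B 0).det = (-1 : ℝ) ^ (i + j : ℕ) * C.det := by
        rw [Matrix.det_succ_row (B 1) i, Matrix.det_succ_row (B 0) i]
        have hsame : ∀ b : Fin (k + 1),
            ((B 1).submatrix i.succAbove b.succAbove)
              = ((B 0).submatrix i.succAbove b.succAbove) := by
          intro b; ext a' b''
          simp [Matrix.submatrix_apply, hoff]
        rw [← Finset.sum_sub_distrib]
        rw [Finset.sum_eq_single j]
        · rw [hsame j, hsub 0, hrowi, hrowi]
          simp only [hrow, Fin.insertNth_apply_same]
          ring
        · intro b _ hb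
          obtain ⟨b', rfl⟩ := Fin.exists_succAbove_eq hb
          rw [hsame, hrowi, hrowi]
          simp only [hrow, Fin.insertNth_apply_succAbove]
          ring
        · intro h; exact absurd (Finset.mem_univ j) h
      by_cases h0 : (B 0).det ≠ 0
      · exact ⟨B 0, hBpat 0, h0⟩
      · push_neg at h0
        refine ⟨B 1, hBpat 1, ?_⟩
        have h1 : (B 1).det = (-1 : ℝ) ^ (i + j : ℕ) * C.det := by
          rw [← hdiff, h0, sub_zero]
        rw [h1]
        exact mul_ne_zero (pow_ne_zero _ (by norm_num)) hCdet

/-- A rectangle-free set of p^3 positions in a p² × p² grid (point–line incidences). -/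
lemma exists_rectFree_set (p : ℕ) (hp : p.Prime) :
    ∃ S : Finset (Fin (p ^ 2) × Fin (p ^ 2)), S.card = p ^ 3 ∧
      ∀ a a' b b', (a, b) ∈ S → (a, b') ∈ S → (a', b) ∈ S → (a', b') ∈ S →
        a = a' ∨ b = b' := by
  haveI : Fact p.Prime := ⟨hp⟩
  haveI : NeZero p := ⟨hp.ne_zero⟩
  have hcard : Fintype.card (Fin (p ^ 2)) = Fintype.card (ZMod p × ZMod p) := by
    simp [ZMod.card, sq]
  let e : Fin (p ^ 2) ≃ ZMod p × ZMod p := Fintype.equivOfCardEq hcard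
  refine ⟨Finset.univ.filter fun q : Fin (p ^ 2) × Fin (p ^ 2) =>
    (e q.2).2 = (e q.2).1 * (e q.1).1 + (e q.1).2, ?_, ?_⟩
  · have hbij : (Finset.univ.filter fun q : Fin (p ^ 2) × Fin (p ^ 2) =>
        (e q.2).2 = (e q.2).1 * (e q.1).1 + (e q.1).2).card
        = (Finset.univ : Finset ((ZMod p × ZMod p) × ZMod p)).card := by
      apply Finset.card_bij' (fun q _ => (e q.1, (e q.2).1))
        (fun r _ => (e.symm r.1, e.symm (r.2, r.2 * r.1.1 + r.1.2)))
      · intro q hq; exact Finset.mem_univ _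
      · intro r hr
        simp only [Finset.mem_filter, Finset.mem_univ, true_and]
        simp
      · intro q hq
        simp only [Finset.mem_filter, Finset.mem_univ, true_and] at hq
        have : ((e q.2).1, (e q.2).1 * (e q.1).1 + (e q.1).2) = e q.2 := by
          apply Prod.ext
          · rfl
          · exact hq.symm
        simp [this]
      · intro r hr
        simp
    rw [hbij]
    simp [Finset.card_univ, ZMod.card]
    ring
  · intro a a' b b' h1 h2 h3 h4
    simp only [Finset.mem_filter, Finset.mem_univ, true_and] at h1 h2 h3 h4
    by_cases hu : (e b).1 = (e b').1
    · right
      apply e.injective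
      apply Prod.ext hu
      linear_combination h1 - h2 + (e a).1 * hu
    · left
      apply e.injective
      have hx : (e a).1 = (e a').1 := by
        have hsub : ((e b).1 - (e b').1) * (e a).1 = ((e b).1 - (e b').1) * (e a').1 := by
          linear_combination h3 + h2 - h1 - h4
        exact mul_left_cancel₀ (sub_ne_zero.mpr hu) hsub
      have h13 : (e b).1 * (e a).1 + (e a).2 = (e b).1 * (e a').1 + (e a').2 :=
        h1.symm.trans h3
      rw [hx] at h13
      exact Prod.ext hx (add_left_cancel h13)

open MvPolynomial in
/-- A generic completion of a rectangle-free 1-pattern is totally nonsingular. -/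
lemma exists_TNS_of_rectFree (n : ℕ) (S : Finset (Fin n × Fin n))
    (hrf : ∀ a a' b b', (a, b) ∈ S → (a, b') ∈ S → (a', b) ∈ S → (a', b') ∈ S →
      a = a' ∨ b = b') :
    ∃ A : Matrix (Fin n) (Fin n) ℝ, TotallyNonsingular A ∧ ∀ q ∈ S, A q.1 q.2 = 1 := by
  classical
  set M : Matrix (Fin n) (Fin n) (MvPolynomial (Fin n × Fin n) ℝ) :=
    fun a b => if (a, b) ∈ S then 1 else X (a, b) with hM
  have claim1 : ∀ (k : ℕ) (f g : Fin k → Fin n), Function.Injective f →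
      Function.Injective g → (M.submatrix f g).det ≠ 0 := by
    intro k f g hf hg
    set pat : Fin k → Fin k → Bool := fun i j => decide ((f i, g j) ∈ S) with hpat
    have hrf' : ∀ i i' j j', pat i j → pat i j' → pat i' j → pat i' j' → i = i' ∨ j = j' := by
      intro i i' j j' h1 h2 h3 h4
      simp only [hpat, decide_eq_true_eq] at h1 h2 h3 h4
      rcases hrf _ _ _ _ h1 h2 h3 h4 with h | h
      · exact Or.inl (hf h)
      · exact Or.inr (hg h)
    obtain ⟨B, hB1, hBdet⟩ := rectFree_pattern_completion k pat hrf'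
    set x : Fin n × Fin n → ℝ := fun q =>
      if h : (∃ i, f i = q.1) ∧ (∃ j, g j = q.2) then B h.1.choose h.2.choose else 0 with hx
    have hmap : (M.submatrix f g).map (eval x) = B := by
      ext i jj
      show eval x (M (f i) (g jj)) = B i jj
      simp only [hM]
      by_cases hmem : (f i, g jj) ∈ S
      · rw [if_pos hmem, map_one]
        exact (hB1 i jj (by simp [hpat, hmem])).symm
      · rw [if_neg hmem, eval_X]
        have hcond : (∃ i', f i' = f i) ∧ (∃ j', g j' = g jj) := ⟨⟨i, rfl⟩, ⟨jj, rfl⟩⟩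
        simp only [hx, dif_pos hcond]
        congr 1
        · exact hf hcond.1.choose_spec
        · exact hg hcond.2.choose_spec
    intro hdet0
    apply hBdet
    rw [← hmap]
    have h2 := RingHom.map_det (eval x) (M.submatrix f g)
    rw [hdet0, map_zero] at h2
    rw [RingHom.mapMatrix_apply] at h2
    exact h2.symm
  set T : Finset (Σ k : Fin (n + 1), (Fin k → Fin n) × (Fin k → Fin n)) :=
    Finset.univ.filter fun t => StrictMono t.2.1 ∧ StrictMono t.2.2 with hT
  set P : MvPolynomial (Fin n × Fin n) ℝ := ∏ t ∈ T, (M.submatrix t.2.1 t.2.2).det with hP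
  have hPne : P ≠ 0 := by
    rw [hP, Finset.prod_ne_zero_iff]
    intro t ht
    rw [hT, Finset.mem_filter] at ht
    exact claim1 _ _ _ ht.2.1.injective ht.2.2.injective
  obtain ⟨x, hxP⟩ : ∃ x, eval x P ≠ 0 := by
    by_contra h
    push_neg at h
    exact hPne (MvPolynomial.funext fun x => by rw [h x, map_zero])
  refine ⟨M.map (eval x), ?_, ?_⟩
  · intro k f g hf hg
    have hk : k ≤ n := by
      have := Fintype.card_le_of_injective f hf.injective
      simpa using this
    have hmem : (⟨⟨k, Nat.lt_succ_of_le hk⟩, (f, g)⟩ :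
        Σ k : Fin (n + 1), (Fin k → Fin n) × (Fin k → Fin n)) ∈ T := by
      rw [hT, Finset.mem_filter]
      exact ⟨Finset.mem_univ _, hf, hg⟩
    have hdvd : (M.submatrix f g).det ∣ P := by
      have h := Finset.dvd_prod_of_mem (fun t : Σ k : Fin (n + 1), (Fin k → Fin n) × (Fin k → Fin n) => (M.submatrix t.2.1 t.2.2).det) hmem
      dsimp only at h
      exact h
    obtain ⟨r, hr⟩ := hdvd
    have hne : eval x (M.submatrix f g).det ≠ 0 := fun h0 =>
      hxP (by rw [hr, map_mul, h0, zero_mul])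
    have heq : ((M.map (eval x)).submatrix f g).det = eval x (M.submatrix f g).det := by
      rw [RingHom.map_det, RingHom.mapMatrix_apply]
      rfl
    rw [heq]
    exact hne
  · intro q hq
    have : M q.1 q.2 = 1 := by rw [hM]; simp [hq]
    simp [Matrix.map_apply, this]

/-- for infinitely many n there is an n-by-n totally nonsingular
matrix with some value of multiplicity at least c·n^{3/2}. -/
theorem stmt_3 : ∃ c : ℝ, 0 < c ∧ ∀ N : ℕ, ∃ n : ℕ, N ≤ n ∧
    ∃ (A : Matrix (Fin n) (Fin n) ℝ) (b : ℝ), TotallyNonsingular A ∧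
      c * (n : ℝ) ^ ((3 : ℝ) / 2)
        ≤ ((Finset.univ.filter fun q : Fin n × Fin n => A q.1 q.2 = b).card : ℝ) := by
  refine ⟨1, one_pos, fun N => ?_⟩
  obtain ⟨p, hpN, hp⟩ := Nat.exists_infinite_primes N
  refine ⟨p ^ 2, le_trans hpN (Nat.le_self_pow two_ne_zero p), ?_⟩
  obtain ⟨S, hScard, hSrf⟩ := exists_rectFree_set p hp
  obtain ⟨A, hATNS, hA1⟩ := exists_TNS_of_rectFree (p ^ 2) S hSrf
  refine ⟨A, 1, hATNS, ?_⟩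
  have hsubset : S ⊆ Finset.univ.filter fun q : Fin (p ^ 2) × Fin (p ^ 2) =>
      A q.1 q.2 = 1 := by
    intro q hq
    simp only [Finset.mem_filter, Finset.mem_univ, true_and]
    exact hA1 q hq
  have hcard : (p ^ 3 : ℝ) ≤
      ((Finset.univ.filter fun q : Fin (p ^ 2) × Fin (p ^ 2) => A q.1 q.2 = 1).card : ℝ) := by
    have := Finset.card_le_card hsubset
    rw [hScard] at this
    exact_mod_cast this
  have hpow : ((p ^ 2 : ℕ) : ℝ) ^ ((3 : ℝ) / 2) = (p : ℝ) ^ 3 := by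
    push_cast
    rw [← Real.rpow_natCast (p : ℝ) 2, ← Real.rpow_natCast (p : ℝ) 3,
      ← Real.rpow_mul (Nat.cast_nonneg p)]
    norm_num
  rw [one_mul, hpow]
  exact_mod_cast hcard
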